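/- arXiv:1604.00431 — 5 statements merged into one kernel-verified Lean document; each statement's English description precedes it below -/
import Mathlib

section
/- Let A > 0, ω > 0, ρ ∈ (0,1), η ∈ ℝ, and let g : (0,∞) → ℝ be continuous with g(y)/y^ρ → 0 as y → 0⁺. Then there exist an integer M and a sequence (y_m)_{m ≥ M} of positive reals such that for each m ≥ M: y_m solves y_m = A·y_m^ρ·cos(ω·ln(1/y_m) + η) + g(y_m), the phase satisfies ω·ln(1/y_m) + η ∈ (mπ, (m+1)π), and moreover y_m·exp(mπ/ω) → exp((2η − π)/(2ω)) as m → ∞. -/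
private lemma ivt_sign' {f : ℝ → ℝ} {a b : ℝ} (hab : a < b)
    (hf : ContinuousOn f (Set.Icc a b)) (h : f a * f b < 0) :
    ∃ c ∈ Set.Ioo a b, f c = 0 := by
  rcases mul_neg_iff.mp h with ⟨ha, hb⟩ | ⟨ha, hb⟩
  · obtain ⟨c, hc, hc0⟩ := intermediate_value_Ioo' hab.le hf (Set.mem_Ioo.mpr ⟨hb, ha⟩)
    exact ⟨c, hc, hc0⟩
  · obtain ⟨c, hc, hc0⟩ := intermediate_value_Ioo hab.le hf (Set.mem_Ioo.mpr ⟨ha, hb⟩)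
    exact ⟨c, hc, hc0⟩

set_option maxHeartbeats 1600000 in
/-- Asymptotics of the Shilnikov fixed points: solutions `y_m` in the strips
    `(mπ, (m+1)π)` satisfy `y_m · e^{mπ/ω} → e^{(2η-π)/(2ω)}`. -/
theorem stmt6 (A ω ρ η : ℝ) (hA : 0 < A) (hω : 0 < ω) (hρ0 : 0 < ρ) (hρ1 : ρ < 1)
    (g : ℝ → ℝ) (hg : ContinuousOn g (Set.Ioi 0))
    (hg0 : Filter.Tendsto (fun y => g y / y ^ ρ) (nhdsWithin 0 (Set.Ioi 0)) (nhds 0)) :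
    ∃ (M : ℤ) (y : ℤ → ℝ),
      (∀ m : ℤ, M ≤ m → 0 < y m ∧
        y m = A * y m ^ ρ * Real.cos (ω * Real.log (1 / y m) + η) + g (y m) ∧
        ω * Real.log (1 / y m) + η ∈
          Set.Ioo ((m : ℝ) * Real.pi) (((m : ℝ) + 1) * Real.pi)) ∧
      Filter.Tendsto (fun m : ℤ => y m * Real.exp ((m : ℝ) * Real.pi / ω)) Filter.atTop
        (nhds (Real.exp ((2 * η - Real.pi) / (2 * ω)))) := by
  have hπ := Real.pi_pos
  set φ : ℝ → ℝ := fun θ => Real.exp ((η - θ) / ω) with hφdef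
  have hφpos : ∀ θ, 0 < φ θ := fun θ => Real.exp_pos _
  have hφcont : Continuous φ :=
    Real.continuous_exp.comp ((continuous_const.sub continuous_id).div_const ω)
  have hφlog : ∀ θ : ℝ, ω * Real.log (1 / φ θ) + η = θ := by
    intro θ
    rw [hφdef]
    simp only [one_div, Real.log_inv, Real.log_exp]
    field_simp
    ring
  -- smallness of the perturbation
  obtain ⟨δ, hδpos, hδ⟩ :
      ∃ δ > 0, ∀ y : ℝ, 0 < y → y < δ → |g y - y| ≤ A / 2 * y ^ ρ := by
    have h1 : ∀ᶠ y in nhdsWithin 0 (Set.Ioi 0), |g y / y ^ ρ| < A / 4 := by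
      have := Metric.tendsto_nhds.mp hg0 (A / 4) (by linarith)
      simp only [Real.dist_eq, sub_zero] at this
      exact this
    have h2 : ∀ᶠ y in nhdsWithin 0 (Set.Ioi 0), |y ^ (1 - ρ)| < A / 4 := by
      have hc : Filter.Tendsto (fun y : ℝ => y ^ (1 - ρ))
          (nhdsWithin 0 (Set.Ioi 0)) (nhds 0) := by
        have h0 := (Real.continuousAt_rpow_const 0 (1 - ρ) (Or.inr (by linarith))).tendsto
        rw [Real.zero_rpow (by intro h; linarith [h] : (1 : ℝ) - ρ ≠ 0)] at h0
        exact h0.mono_left nhdsWithin_le_nhds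
      have := Metric.tendsto_nhds.mp hc (A / 4) (by linarith)
      simp only [Real.dist_eq, sub_zero] at this
      exact this
    obtain ⟨u, hu, hsub⟩ := mem_nhdsGT_iff_exists_Ioo_subset.mp (h1.and h2)
    refine ⟨u, hu, fun y hy hyu => ?_⟩
    obtain ⟨e1, e2⟩ := hsub ⟨hy, hyu⟩
    have hyρ : (0 : ℝ) < y ^ ρ := Real.rpow_pos_of_pos hy ρ
    have hy1 : y = y ^ (1 - ρ) * y ^ ρ := by
      rw [← Real.rpow_add hy]; norm_num
    have e1' : |g y| < A / 4 * y ^ ρ := by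
      rw [abs_div, abs_of_pos hyρ] at e1
      exact (div_lt_iff₀ hyρ).mp e1
    have e2' : y < A / 4 * y ^ ρ := by
      have h3 : y ^ (1 - ρ) < A / 4 := lt_of_abs_lt e2
      calc y = y ^ (1 - ρ) * y ^ ρ := hy1
        _ < A / 4 * y ^ ρ := by exact mul_lt_mul_of_pos_right h3 hyρ
    have := abs_lt.mp e1'
    rw [abs_le]
    constructor <;> nlinarith
  -- threshold
  set T : ℝ := η - ω * Real.log δ with hTdef
  have hsmallθ : ∀ θ : ℝ, T < θ → |g (φ θ) - φ θ| ≤ A / 2 * (φ θ) ^ ρ := by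
    intro θ hθ
    refine hδ _ (hφpos θ) ?_
    rw [hφdef, ← Real.exp_log hδpos]
    apply Real.exp_lt_exp.mpr
    rw [div_lt_iff₀ hω]
    rw [hTdef] at hθ
    nlinarith
  set M : ℤ := ⌈T / Real.pi⌉ + 1 with hMdef
  have hMπ : ∀ m : ℤ, M ≤ m → T < (m : ℝ) * Real.pi := by
    intro m hm
    have h1 : T / Real.pi ≤ (⌈T / Real.pi⌉ : ℝ) := Int.le_ceil _
    have h1' : T ≤ (⌈T / Real.pi⌉ : ℝ) * Real.pi := (div_le_iff₀ hπ).mp h1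
    have h2 : ((M : ℤ) : ℝ) ≤ (m : ℝ) := by exact_mod_cast hm
    have h3 : ((M : ℤ) : ℝ) = (⌈T / Real.pi⌉ : ℝ) + 1 := by rw [hMdef]; push_cast; ring
    nlinarith
  set F : ℝ → ℝ := fun θ => A * (φ θ) ^ ρ * Real.cos θ + g (φ θ) - φ θ with hFdef
  have hgφ : Continuous fun θ => g (φ θ) :=
    hg.comp_continuous hφcont fun θ => hφpos θ
  have hFcont : Continuous F := by
    rw [hFdef]
    exact (((continuous_const.mul
      (hφcont.rpow_const fun θ => Or.inl (hφpos θ).ne')).mul Real.continuous_cos).add hgφ).sub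
      hφcont
  have key : ∀ m : ℤ, M ≤ m →
      ∃ θ ∈ Set.Ioo ((m : ℝ) * Real.pi) (((m : ℝ) + 1) * Real.pi), F θ = 0 := by
    intro m hm
    have hab : (m : ℝ) * Real.pi < ((m : ℝ) + 1) * Real.pi := by nlinarith
    apply ivt_sign' hab hFcont.continuousOn
    set a : ℝ := (m : ℝ) * Real.pi with hadef
    set b : ℝ := ((m : ℝ) + 1) * Real.pi with hbdef
    have hcos1 : Real.cos a = (-1 : ℝ) ^ m := by
      have := Real.cos_add_int_mul_pi 0 m
      simpa using this
    have hcos2 : Real.cos b = -(-1 : ℝ) ^ m := by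
      have := Real.cos_add_int_mul_pi Real.pi m
      rw [Real.cos_pi] at this
      rw [show b = Real.pi + (m : ℝ) * Real.pi by rw [hbdef]; ring, this]
      ring
    have hTa : T < a := hMπ m hm
    have hTb : T < b := by rw [hbdef]; nlinarith [hMπ m hm]
    have hpa : (0 : ℝ) < (φ a) ^ ρ := Real.rpow_pos_of_pos (hφpos a) ρ
    have hpb : (0 : ℝ) < (φ b) ^ ρ := Real.rpow_pos_of_pos (hφpos b) ρ
    have hsa := abs_le.mp (hsmallθ a hTa)
    have hsb := abs_le.mp (hsmallθ b hTb)
    have hFa : F a = A * (φ a) ^ ρ * (-1 : ℝ) ^ m + (g (φ a) - φ a) := by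
      rw [hFdef]; simp only [hcos1]; ring
    have hFb : F b = -(A * (φ b) ^ ρ * (-1 : ℝ) ^ m) + (g (φ b) - φ b) := by
      rw [hFdef]; simp only [hcos2]; ring
    rcases Int.even_or_odd m with he | ho
    · rw [he.neg_one_zpow] at hFa hFb
      have h1 : 0 < F a := by rw [hFa]; nlinarith
      have h2 : F b < 0 := by rw [hFb]; nlinarith
      exact mul_neg_of_pos_of_neg h1 h2
    · rw [ho.neg_one_zpow] at hFa hFb
      have h1 : F a < 0 := by rw [hFa]; nlinarith
      have h2 : 0 < F b := by rw [hFb]; nlinarith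
      exact mul_neg_of_neg_of_pos h1 h2
  choose! Θ hΘmem hΘ0 using key
  refine ⟨M, fun m => φ (Θ m), fun m hm => ⟨hφpos _, ?_, ?_⟩, ?_⟩
  · -- fixed point equation
    have h0 := hΘ0 m hm
    rw [hFdef] at h0
    simp only at h0
    rw [hφlog (Θ m)]
    linarith
  · rw [hφlog (Θ m)]
    exact hΘmem m hm
  · -- asymptotics
    have hy0 : Filter.Tendsto (fun m : ℤ => φ (Θ m)) Filter.atTop
        (nhdsWithin 0 (Set.Ioi 0)) := by
      rw [tendsto_nhdsWithin_iff]
      constructor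
      · have hupper : Filter.Tendsto (fun m : ℤ => Real.exp ((η - (m : ℝ) * Real.pi) / ω))
            Filter.atTop (nhds 0) := by
          apply Real.tendsto_exp_atBot.comp
          apply Filter.Tendsto.atBot_div_const hω
          apply Filter.tendsto_atBot_add_const_left _ η
          apply Filter.tendsto_neg_atTop_atBot.comp
          exact tendsto_intCast_atTop_atTop.atTop_mul_const hπ
        refine tendsto_of_tendsto_of_tendsto_of_le_of_le' tendsto_const_nhds hupper ?_ ?_
        · exact Filter.Eventually.of_forall fun m => (hφpos _).le
        · filter_upwards [Filter.eventually_ge_atTop M] with m hm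
          have h1 := (hΘmem m hm).1
          show Real.exp ((η - Θ m) / ω) ≤ Real.exp ((η - (m : ℝ) * Real.pi) / ω)
          apply Real.exp_le_exp.mpr
          gcongr <;> linarith
      · exact Filter.Eventually.of_forall fun m => hφpos _
    have hcos0 : Filter.Tendsto (fun m : ℤ => Real.cos (Θ m)) Filter.atTop (nhds 0) := by
      have t1 : Filter.Tendsto (fun m : ℤ => (φ (Θ m)) ^ (1 - ρ)) Filter.atTop (nhds 0) := by
        have h0 := (Real.continuousAt_rpow_const 0 (1 - ρ) (Or.inr (by linarith))).tendsto
        rw [Real.zero_rpow (by intro h; linarith [h] : (1 : ℝ) - ρ ≠ 0)] at h0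
        exact h0.comp (hy0.mono_right nhdsWithin_le_nhds)
      have t2 : Filter.Tendsto (fun m : ℤ => g (φ (Θ m)) / (φ (Θ m)) ^ ρ) Filter.atTop
          (nhds 0) := hg0.comp hy0
      have hrhs : Filter.Tendsto
          (fun m : ℤ => ((φ (Θ m)) ^ (1 - ρ) - g (φ (Θ m)) / (φ (Θ m)) ^ ρ) / A)
          Filter.atTop (nhds 0) := by
        have h5 : ((0:ℝ) - 0) / A = 0 := by ring
        have h6 := (t1.sub t2).div_const A
        rwa [h5] at h6
      refine hrhs.congr' ?_
      filter_upwards [Filter.eventually_ge_atTop M] with m hm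
      have h0 := hΘ0 m hm
      rw [hFdef] at h0
      simp only at h0
      have hp : (0 : ℝ) < (φ (Θ m)) ^ ρ := Real.rpow_pos_of_pos (hφpos _) ρ
      rw [Real.rpow_sub (hφpos _), Real.rpow_one, div_sub_div_same, div_div,
        div_eq_iff (by positivity)]
      linear_combination -h0
    have hθhalf : Filter.Tendsto (fun m : ℤ => Θ m - (m : ℝ) * Real.pi) Filter.atTop
        (nhds (Real.pi / 2)) := by
      rw [Metric.tendsto_nhds]
      intro ε hε
      set ε' : ℝ := min ε (Real.pi / 4) with hε'def
      have hε'pos : 0 < ε' := lt_min hε (by linarith)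
      have hε'le : ε' ≤ ε := min_le_left _ _
      have hε'lt : ε' < Real.pi / 2 := lt_of_le_of_lt (min_le_right _ _) (by linarith)
      have hsin : 0 < Real.sin ε' := Real.sin_pos_of_pos_of_lt_pi hε'pos (by linarith)
      filter_upwards [Metric.tendsto_nhds.mp hcos0 _ hsin, Filter.eventually_ge_atTop M]
        with m hcosm hm
      rw [Real.dist_eq, sub_zero] at hcosm
      rw [Real.dist_eq]
      set t : ℝ := Θ m - (m : ℝ) * Real.pi with htdef
      have ht0 : 0 < t := by
        have := (hΘmem m hm).1; rw [htdef]; linarith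
      have htπ : t < Real.pi := by
        have := (hΘmem m hm).2; rw [htdef]; nlinarith
      have hcost : |Real.cos t| < Real.sin ε' := by
        have hΘt : Θ m = t + (m : ℝ) * Real.pi := by rw [htdef]; ring
        have h1 : Real.cos (Θ m) = (-1 : ℝ) ^ m * Real.cos t := by
          rw [hΘt]; exact Real.cos_add_int_mul_pi t m
        have h2 : |Real.cos (Θ m)| = |Real.cos t| := by
          have habs : |(-1 : ℝ) ^ m| = 1 := by
            rcases Int.even_or_odd m with he | ho
            · rw [he.neg_one_zpow]; simp
            · rw [ho.neg_one_zpow]; simp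
          rw [h1, abs_mul, habs, one_mul]
        rw [← h2]; exact hcosm
      have h2 : Real.pi / 2 - ε' < t := by
        by_contra hcon
        push_neg at hcon
        have h3 : Real.sin ε' ≤ Real.cos t := by
          rw [← Real.cos_pi_div_two_sub]
          exact Real.cos_le_cos_of_nonneg_of_le_pi ht0.le (by linarith) hcon
        have := le_abs_self (Real.cos t)
        linarith
      have h3 : t < Real.pi / 2 + ε' := by
        by_contra hcon
        push_neg at hcon
        have h4 : Real.cos t ≤ -Real.sin ε' := by
          have hca : Real.cos (Real.pi / 2 + ε') = -Real.sin ε' := by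
            rw [Real.cos_add]; simp
          rw [← hca]
          exact Real.cos_le_cos_of_nonneg_of_le_pi (by linarith) htπ.le hcon
        have := neg_abs_le (Real.cos t)
        linarith
      exact abs_lt.mpr ⟨by linarith, by linarith⟩
    have hconst : (2 * η - Real.pi) / (2 * ω) = (η - Real.pi / 2) / ω := by
      field_simp
    rw [hconst]
    have hfin : Filter.Tendsto
        (fun m : ℤ => Real.exp ((η - (Θ m - (m : ℝ) * Real.pi)) / ω)) Filter.atTop
        (nhds (Real.exp ((η - Real.pi / 2) / ω))) := by
      have hcont : Continuous fun s : ℝ => Real.exp ((η - s) / ω) :=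
        Real.continuous_exp.comp ((continuous_const.sub continuous_id).div_const ω)
      exact (hcont.tendsto (Real.pi / 2)).comp hθhalf
    refine hfin.congr fun m => ?_
    rw [hφdef]
    simp only
    rw [← Real.exp_add]
    congr 1
    field_simp
    ring
end

section
/- Let A, A₁, ω, ρ, η, η₁ be real numbers and define F : (0,∞) × ℝ → ℝ² by F(y, x) = (A·x·y^ρ·cos(ω·ln(1/y) + η), A₁·x·y^ρ·cos(ω·ln(1/y) + η₁)). Then F is differentiable at every point (y, x) with y > 0, and the determinant of its derivative equals ω·A·A₁·x·y^{2ρ−1}·sin(η − η₁). -/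
open Real

lemma det_aux (L : (ℝ × ℝ) →ₗ[ℝ] (ℝ × ℝ)) :
    LinearMap.det L = (L (1,0)).1 * (L (0,1)).2 - (L (0,1)).1 * (L (1,0)).2 := by
  rw [← LinearMap.det_toMatrix (Module.Basis.finTwoProd ℝ), Matrix.det_fin_two]
  simp [LinearMap.toMatrix_apply, Module.Basis.coe_finTwoProd_repr, Module.Basis.finTwoProd_zero,
    Module.Basis.finTwoProd_one]

lemma hasderiv_u (a ω ρ η : ℝ) (y : ℝ) (hy : 0 < y) :
    HasDerivAt (fun t : ℝ => a * t ^ ρ * Real.cos (ω * Real.log (1 / t) + η))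
      (a * (ρ * y ^ (ρ - 1)) * Real.cos (ω * Real.log (1 / y) + η)
        + a * y ^ ρ * (Real.sin (ω * Real.log (1 / y) + η) * (ω * y⁻¹))) y := by
  have hy' : y ≠ 0 := ne_of_gt hy
  have hpow : HasDerivAt (fun t : ℝ => a * t ^ ρ) (a * (ρ * y ^ (ρ - 1))) y :=
    (Real.hasDerivAt_rpow_const (Or.inl hy')).const_mul a
  have hlog : HasDerivAt (fun t : ℝ => Real.log (1 / t)) (-(y⁻¹)) y := by
    have h1 : HasDerivAt (fun t : ℝ => -Real.log t) (-(y⁻¹)) y :=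
      (Real.hasDerivAt_log hy').neg
    refine h1.congr_of_eventuallyEq ?_
    filter_upwards with t
    rw [one_div, Real.log_inv]
  have hinner : HasDerivAt (fun t : ℝ => ω * Real.log (1 / t) + η) (ω * -(y⁻¹)) y :=
    (hlog.const_mul ω).add_const η
  have hcos : HasDerivAt (fun t : ℝ => Real.cos (ω * Real.log (1 / t) + η))
      (-Real.sin (ω * Real.log (1 / y) + η) * (ω * -(y⁻¹))) y := hinner.cos
  have := hpow.mul hcos
  refine this.congr_deriv ?_
  ring

/-- The leading part of the Shilnikov return map is differentiable at every point with
    `y > 0`, and its Jacobian determinant equals `ω A A₁ x y^{2ρ-1} sin(η - η₁)`. -/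
theorem stmt7 (A A₁ ω ρ η η₁ : ℝ)
    (F : ℝ × ℝ → ℝ × ℝ)
    (hF : F = fun p : ℝ × ℝ =>
      (A * p.2 * p.1 ^ ρ * Real.cos (ω * Real.log (1 / p.1) + η),
       A₁ * p.2 * p.1 ^ ρ * Real.cos (ω * Real.log (1 / p.1) + η₁))) :
    ∀ y x : ℝ, 0 < y →
      DifferentiableAt ℝ F (y, x) ∧
      LinearMap.det ((fderiv ℝ F (y, x)) : (ℝ × ℝ) →ₗ[ℝ] (ℝ × ℝ)) =
        ω * A * A₁ * x * y ^ (2 * ρ - 1) * Real.sin (η - η₁) := by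
  intro y x hy
  have hy' : y ≠ 0 := ne_of_gt hy
  set u₁ : ℝ → ℝ := fun t => A * t ^ ρ * Real.cos (ω * Real.log (1 / t) + η) with hu₁def
  set u₂ : ℝ → ℝ := fun t => A₁ * t ^ ρ * Real.cos (ω * Real.log (1 / t) + η₁) with hu₂def
  set d₁ : ℝ := A * (ρ * y ^ (ρ - 1)) * Real.cos (ω * Real.log (1 / y) + η)
    + A * y ^ ρ * (Real.sin (ω * Real.log (1 / y) + η) * (ω * y⁻¹)) with hd₁def
  set d₂ : ℝ := A₁ * (ρ * y ^ (ρ - 1)) * Real.cos (ω * Real.log (1 / y) + η₁)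
    + A₁ * y ^ ρ * (Real.sin (ω * Real.log (1 / y) + η₁) * (ω * y⁻¹)) with hd₂def
  have hu₁ : HasDerivAt u₁ d₁ y := hasderiv_u A ω ρ η y hy
  have hu₂ : HasDerivAt u₂ d₂ y := hasderiv_u A₁ ω ρ η₁ y hy
  have hFeq : F = fun p : ℝ × ℝ => (p.2 * u₁ p.1, p.2 * u₂ p.1) := by
    rw [hF]; funext p
    simp only [hu₁def, hu₂def, Prod.mk.injEq]
    constructor <;> ring
  have hc₁ : HasFDerivAt (fun p : ℝ × ℝ => u₁ p.1)
      (d₁ • ContinuousLinearMap.fst ℝ ℝ ℝ) (y, x) :=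
    hu₁.comp_hasFDerivAt (f := Prod.fst) (y, x) hasFDerivAt_fst
  have hc₂ : HasFDerivAt (fun p : ℝ × ℝ => u₂ p.1)
      (d₂ • ContinuousLinearMap.fst ℝ ℝ ℝ) (y, x) :=
    hu₂.comp_hasFDerivAt (f := Prod.fst) (y, x) hasFDerivAt_fst
  have hm₁ := hasFDerivAt_snd.mul hc₁
  have hm₂ := hasFDerivAt_snd.mul hc₂
  have hFd : HasFDerivAt F
      ((x • (d₁ • ContinuousLinearMap.fst ℝ ℝ ℝ) + u₁ y • ContinuousLinearMap.snd ℝ ℝ ℝ).prod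
       (x • (d₂ • ContinuousLinearMap.fst ℝ ℝ ℝ) + u₂ y • ContinuousLinearMap.snd ℝ ℝ ℝ)) (y, x) := by
    rw [hFeq]
    exact hm₁.prodMk hm₂
  refine ⟨hFd.differentiableAt, ?_⟩
  rw [hFd.fderiv, det_aux]
  simp only [ContinuousLinearMap.coe_prod, LinearMap.prod_apply, Pi.prod, Function.prod_apply,
    ContinuousLinearMap.coe_coe, ContinuousLinearMap.add_apply,
    ContinuousLinearMap.smul_apply, ContinuousLinearMap.coe_fst',
    ContinuousLinearMap.coe_snd', smul_eq_mul]
  -- rpow identities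
  have h3 : y ^ ρ * y⁻¹ = y ^ (ρ - 1) := by
    rw [Real.rpow_sub hy, Real.rpow_one, div_eq_mul_inv]
  have h1 : y ^ (ρ - 1) * y ^ ρ = y ^ (2 * ρ - 1) := by
    rw [← Real.rpow_add hy]; ring_nf
  have hsin : Real.sin (ω * Real.log (1 / y) + η) * Real.cos (ω * Real.log (1 / y) + η₁)
      - Real.cos (ω * Real.log (1 / y) + η) * Real.sin (ω * Real.log (1 / y) + η₁)
      = Real.sin (η - η₁) := by
    rw [← Real.sin_sub]; ring_nf
  rw [hd₁def, hd₂def, hu₁def, hu₂def, ← h1, ← hsin]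
  simp only
  linear_combination (ω * A * A₁ * x * y ^ ρ *
    (Real.sin (ω * Real.log (1 / y) + η) * Real.cos (ω * Real.log (1 / y) + η₁)
      - Real.cos (ω * Real.log (1 / y) + η) * Real.sin (ω * Real.log (1 / y) + η₁))) * h3
end

section
/- Let A, A₁, ω, ρ, η, η₁ be real numbers with ω > 0, 0 < ρ < 1/2 and A·A₁·sin(η − η₁) ≠ 0, and define F : (0,∞) × ℝ → ℝ² by F(y, x) = (A·x·y^ρ·cos(ω·ln(1/y) + η), A₁·x·y^ρ·cos(ω·ln(1/y) + η₁)). Then for every c > 0 and every K > 0 there exists y₀ > 0 such that for all y ∈ (0, y₀) and all x with |x| ≥ c, the determinant of the derivative of F at (y, x) has absolute value at least K. -/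
open Real ContinuousLinearMap

lemma det_clm_prod (f : (ℝ × ℝ) →L[ℝ] (ℝ × ℝ)) :
    LinearMap.det (f : (ℝ × ℝ) →ₗ[ℝ] (ℝ × ℝ)) =
      (f (1, 0)).1 * (f (0, 1)).2 - (f (0, 1)).1 * (f (1, 0)).2 := by
  rw [← LinearMap.det_toMatrix (Module.Basis.finTwoProd ℝ), Matrix.det_fin_two]
  simp [LinearMap.toMatrix_apply, Module.Basis.finTwoProd_zero, Module.Basis.finTwoProd_one,
    Module.Basis.coe_finTwoProd_repr]

lemma comp_deriv (ω ρ θ : ℝ) {y : ℝ} (hy : 0 < y) (a x : ℝ) :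
    HasFDerivAt (fun p : ℝ × ℝ => a * p.2 * p.1 ^ ρ * Real.cos (ω * Real.log (1 / p.1) + θ))
      (a • ((x • (((1 : ℝ →L[ℝ] ℝ).smulRight
          (ρ * y ^ (ρ - 1) * Real.cos (ω * Real.log (1 / y) + θ) +
            y ^ ρ * (-Real.sin (ω * Real.log (1 / y) + θ) * (ω * -y⁻¹)))).comp
          (ContinuousLinearMap.fst ℝ ℝ ℝ))) +
        (y ^ ρ * Real.cos (ω * Real.log (1 / y) + θ)) • (ContinuousLinearMap.snd ℝ ℝ ℝ)))
      (y, x) := by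
  have hlog : HasDerivAt (fun t : ℝ => Real.log (1 / t)) (-y⁻¹) y := by
    have he : (fun t : ℝ => Real.log (1 / t)) = fun t => -Real.log t := by
      funext t; rw [one_div, Real.log_inv]
    rw [he]
    exact (Real.hasDerivAt_log hy.ne').neg
  have hu : HasDerivAt (fun t : ℝ => ω * Real.log (1 / t) + θ) (ω * -y⁻¹) y :=
    (hlog.const_mul ω).add_const θ
  have hcos : HasDerivAt (fun t : ℝ => Real.cos (ω * Real.log (1 / t) + θ))
      (-Real.sin (ω * Real.log (1 / y) + θ) * (ω * -y⁻¹)) y := hu.cos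
  have hrpow : HasDerivAt (fun t : ℝ => t ^ ρ) (ρ * y ^ (ρ - 1)) y :=
    Real.hasDerivAt_rpow_const (Or.inl hy.ne')
  have hg : HasDerivAt (fun t : ℝ => t ^ ρ * Real.cos (ω * Real.log (1 / t) + θ))
      (ρ * y ^ (ρ - 1) * Real.cos (ω * Real.log (1 / y) + θ) +
        y ^ ρ * (-Real.sin (ω * Real.log (1 / y) + θ) * (ω * -y⁻¹))) y := hrpow.mul hcos
  have h1 : HasFDerivAt (fun p : ℝ × ℝ => p.1 ^ ρ * Real.cos (ω * Real.log (1 / p.1) + θ))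
      (((1 : ℝ →L[ℝ] ℝ).smulRight
          (ρ * y ^ (ρ - 1) * Real.cos (ω * Real.log (1 / y) + θ) +
            y ^ ρ * (-Real.sin (ω * Real.log (1 / y) + θ) * (ω * -y⁻¹)))).comp
          (ContinuousLinearMap.fst ℝ ℝ ℝ)) (y, x) :=
    by have := hg.hasFDerivAt.comp (y, x) (hasFDerivAt_fst (𝕜 := ℝ) (p := (y, x))); exact this
  have h2 := (hasFDerivAt_snd.mul h1).const_mul a
  have he : (fun p : ℝ × ℝ => a * (p.2 * (p.1 ^ ρ * Real.cos (ω * Real.log (1 / p.1) + θ))))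
      = fun p : ℝ × ℝ => a * p.2 * p.1 ^ ρ * Real.cos (ω * Real.log (1 / p.1) + θ) := by
    funext p; ring
  simp only [Pi.mul_apply] at h2
  rw [he] at h2
  convert h2 using 2

/-- Area expansion: under the non-degeneracy condition `A A₁ sin(η - η₁) ≠ 0` and
    `0 < ρ < 1/2`, the Jacobian determinant of the leading part of the return map is
    arbitrarily large for small `y > 0` and `|x|` bounded away from zero. -/
theorem stmt8 (A A₁ ω ρ η η₁ : ℝ) (hω : 0 < ω) (hρ0 : 0 < ρ) (hρ : ρ < 1 / 2)
    (hnd : A * A₁ * Real.sin (η - η₁) ≠ 0)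
    (F : ℝ × ℝ → ℝ × ℝ)
    (hF : F = fun p : ℝ × ℝ =>
      (A * p.2 * p.1 ^ ρ * Real.cos (ω * Real.log (1 / p.1) + η),
       A₁ * p.2 * p.1 ^ ρ * Real.cos (ω * Real.log (1 / p.1) + η₁))) :
    ∀ c > (0 : ℝ), ∀ K > (0 : ℝ), ∃ y₀ > (0 : ℝ), ∀ y ∈ Set.Ioo (0 : ℝ) y₀, ∀ x : ℝ,
      c ≤ |x| →
      K ≤ |LinearMap.det ((fderiv ℝ F (y, x)) : (ℝ × ℝ) →ₗ[ℝ] (ℝ × ℝ))| := by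
  intro c hc K hK
  set M : ℝ := ω * |A * A₁ * Real.sin (η - η₁)| with hM
  have hMpos : 0 < M := mul_pos hω (abs_pos.mpr hnd)
  have hepos : 0 < 1 - 2 * ρ := by linarith
  refine ⟨(c * M / K) ^ (1 - 2 * ρ)⁻¹, Real.rpow_pos_of_pos (by positivity) _, ?_⟩
  rintro y ⟨hy, hyy⟩ x hx
  -- compute fderiv
  have hfd : HasFDerivAt F
      ((A • ((x • (((1 : ℝ →L[ℝ] ℝ).smulRight
          (ρ * y ^ (ρ - 1) * Real.cos (ω * Real.log (1 / y) + η) +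
            y ^ ρ * (-Real.sin (ω * Real.log (1 / y) + η) * (ω * -y⁻¹)))).comp
          (ContinuousLinearMap.fst ℝ ℝ ℝ))) +
        (y ^ ρ * Real.cos (ω * Real.log (1 / y) + η)) • (ContinuousLinearMap.snd ℝ ℝ ℝ))).prod
       (A₁ • ((x • (((1 : ℝ →L[ℝ] ℝ).smulRight
          (ρ * y ^ (ρ - 1) * Real.cos (ω * Real.log (1 / y) + η₁) +
            y ^ ρ * (-Real.sin (ω * Real.log (1 / y) + η₁) * (ω * -y⁻¹)))).comp
          (ContinuousLinearMap.fst ℝ ℝ ℝ))) +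
        (y ^ ρ * Real.cos (ω * Real.log (1 / y) + η₁)) • (ContinuousLinearMap.snd ℝ ℝ ℝ))))
      (y, x) := by
    rw [hF]
    exact HasFDerivAt.prodMk (comp_deriv ω ρ η hy A x) (comp_deriv ω ρ η₁ hy A₁ x)
  rw [hfd.fderiv, det_clm_prod]
  simp only [ContinuousLinearMap.prod_apply, ContinuousLinearMap.add_apply,
    ContinuousLinearMap.smul_apply, ContinuousLinearMap.comp_apply,
    ContinuousLinearMap.coe_fst', ContinuousLinearMap.coe_snd',
    ContinuousLinearMap.smulRight_apply, ContinuousLinearMap.one_apply,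
    smul_eq_mul]
  -- now an explicit real expression; simplify it
  set u := ω * Real.log (1 / y) with hu
  have hsin : Real.sin (u + η) * Real.cos (u + η₁) - Real.cos (u + η) * Real.sin (u + η₁)
      = Real.sin (η - η₁) := by
    rw [← Real.sin_sub]; ring_nf
  have hr1 : y ^ (ρ - 1) = y ^ ρ / y := by
    rw [Real.rpow_sub hy, Real.rpow_one]
  have hr2 : y ^ (2 * ρ - 1) = y ^ ρ * y ^ ρ / y := by
    rw [Real.rpow_sub hy, Real.rpow_one, two_mul, Real.rpow_add hy]
  have hdet : (A * (x * (1 * (ρ * y ^ (ρ - 1) * Real.cos (u + η) +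
        y ^ ρ * (-Real.sin (u + η) * (ω * -y⁻¹)))) + y ^ ρ * Real.cos (u + η) * 0)) *
      (A₁ * (x * (0 * (ρ * y ^ (ρ - 1) * Real.cos (u + η₁) +
        y ^ ρ * (-Real.sin (u + η₁) * (ω * -y⁻¹)))) + y ^ ρ * Real.cos (u + η₁) * 1)) -
      (A * (x * (0 * (ρ * y ^ (ρ - 1) * Real.cos (u + η) +
        y ^ ρ * (-Real.sin (u + η) * (ω * -y⁻¹)))) + y ^ ρ * Real.cos (u + η) * 1)) *
      (A₁ * (x * (1 * (ρ * y ^ (ρ - 1) * Real.cos (u + η₁) +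
        y ^ ρ * (-Real.sin (u + η₁) * (ω * -y⁻¹)))) + y ^ ρ * Real.cos (u + η₁) * 0))
      = A * A₁ * Real.sin (η - η₁) * ω * x * y ^ (2 * ρ - 1) := by
    rw [hr1, hr2, ← hsin]
    field_simp
    ring
  rw [hdet]
  have hyp : (0:ℝ) < y ^ (2 * ρ - 1) := Real.rpow_pos_of_pos hy _
  have habs : |A * A₁ * Real.sin (η - η₁) * ω * x * y ^ (2 * ρ - 1)|
      = M * |x| * y ^ (2 * ρ - 1) := by
    rw [abs_mul, abs_mul, abs_mul, abs_of_pos hω, abs_of_pos hyp, hM]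
    ring
  rw [habs]
  have hE : (0:ℝ) < 1 - 2 * ρ := hepos
  have hy1 : y ^ (1 - 2 * ρ) < c * M / K := by
    calc y ^ (1 - 2 * ρ) < ((c * M / K) ^ (1 - 2 * ρ)⁻¹) ^ (1 - 2 * ρ) :=
          Real.rpow_lt_rpow hy.le hyy hE
      _ = c * M / K := by
          rw [← Real.rpow_mul (by positivity), inv_mul_cancel₀ hE.ne', Real.rpow_one]
  have hinv : y ^ (2 * ρ - 1) = (y ^ (1 - 2 * ρ))⁻¹ := by
    rw [show (2 * ρ - 1 : ℝ) = -(1 - 2 * ρ) by ring, Real.rpow_neg hy.le]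
  have hyppos : (0:ℝ) < y ^ (1 - 2 * ρ) := Real.rpow_pos_of_pos hy _
  rw [hinv, ← div_eq_mul_inv, le_div_iff₀ hyppos]
  have h1 : K * y ^ (1 - 2 * ρ) ≤ K * (c * M / K) :=
    mul_le_mul_of_nonneg_left hy1.le hK.le
  have h2 : K * (c * M / K) = c * M := by field_simp
  have h3 : c * M ≤ M * |x| := by
    rw [mul_comm c M]
    exact mul_le_mul_of_nonneg_left hx hMpos.le
  linarith
end

section
/- Let A > 0, ω > 0, ρ ∈ (0,1), η ∈ ℝ, and define f : (0,∞) → ℝ by f(y) = A·y^ρ·cos(ω·ln(1/y) + η). Then for all 0 < a ≤ b with ω·ln(b/a) ≥ 2π, the image f([a, b]) contains the interval [−A·a^ρ, A·a^ρ]. -/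
/-- Covering property: on any interval `[a, b]` over which the phase sweeps at least a
    full period (`ω ln(b/a) ≥ 2π`), the image of `f(y) = A y^ρ cos(ω ln(1/y) + η)`
    contains `[-A a^ρ, A a^ρ]`. -/
theorem stmt12 (A ω ρ η : ℝ) (hA : 0 < A) (hω : 0 < ω) (hρ0 : 0 < ρ) (hρ1 : ρ < 1)
    (f : ℝ → ℝ)
    (hf : ∀ y ∈ Set.Ioi (0 : ℝ),
      f y = A * y ^ ρ * Real.cos (ω * Real.log (1 / y) + η)) :
    ∀ a b : ℝ, 0 < a → a ≤ b → 2 * Real.pi ≤ ω * Real.log (b / a) →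
      Set.Icc (-(A * a ^ ρ)) (A * a ^ ρ) ⊆ f '' Set.Icc a b := by
  intro a b ha hab hper
  have hb : 0 < b := lt_of_lt_of_le ha hab
  have hπ : (0:ℝ) < Real.pi := Real.pi_pos
  set θa : ℝ := -(ω * Real.log a) + η with hθa
  set θb : ℝ := -(ω * Real.log b) + η with hθb
  have hlog : Real.log (b / a) = Real.log b - Real.log a := Real.log_div hb.ne' ha.ne'
  have hθ : θb + 2 * Real.pi ≤ θa := by
    rw [hlog] at hper; simp only [hθa, hθb]; nlinarith
  -- for t in [θb, θa], the point y(t) = exp((η - t)/ω) lies in [a,b] with phase t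
  have key : ∀ t : ℝ, θb ≤ t → t ≤ θa →
      ∃ y ∈ Set.Icc a b, 0 < y ∧ ω * Real.log (1 / y) + η = t := by
    intro t htb hta
    refine ⟨Real.exp ((η - t) / ω), ⟨?_, ?_⟩, Real.exp_pos _, ?_⟩
    · have h1 : Real.log a ≤ (η - t) / ω := by
        rw [le_div_iff₀ hω]; simp only [hθa] at hta; nlinarith
      calc a = Real.exp (Real.log a) := (Real.exp_log ha).symm
        _ ≤ _ := Real.exp_le_exp.mpr h1
    · have h1 : (η - t) / ω ≤ Real.log b := by
        rw [div_le_iff₀ hω]; simp only [hθb] at htb; nlinarith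
      calc Real.exp ((η - t)/ω) ≤ Real.exp (Real.log b) := Real.exp_le_exp.mpr h1
        _ = b := Real.exp_log hb
    · rw [one_div, Real.log_inv, Real.log_exp]
      field_simp
      ring
  -- a point where cos = 1
  set t1 : ℝ := (⌈θb / (2 * Real.pi)⌉ : ℝ) * (2 * Real.pi) with ht1
  have ht1b : θb ≤ t1 := by
    have := Int.le_ceil (θb / (2 * Real.pi))
    rw [ht1, ← div_le_iff₀ (by positivity)]
    exact this
  have ht1a : t1 ≤ θa := by
    have := (Int.ceil_lt_add_one (θb / (2 * Real.pi))).le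
    have h2 : t1 ≤ θb + 2 * Real.pi := by
      have hx : θb / (2 * Real.pi) * (2 * Real.pi) = θb :=
        div_mul_cancel₀ _ (by positivity)
      rw [ht1]
      nlinarith [this, hπ, hx]
    linarith
  have hcos1 : Real.cos t1 = 1 := by
    rw [ht1]; exact Real.cos_int_mul_two_pi _
  -- a point where cos = -1
  obtain ⟨t2, ht2b, ht2a, hcos2⟩ :
      ∃ t2 : ℝ, θb ≤ t2 ∧ t2 ≤ θa ∧ Real.cos t2 = -1 := by
    by_cases h : t1 + Real.pi ≤ θa
    · exact ⟨t1 + Real.pi, by linarith, h, by rw [Real.cos_add_pi, hcos1]⟩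
    · refine ⟨t1 - Real.pi, by linarith, by linarith, ?_⟩
      rw [Real.cos_sub, Real.cos_pi, Real.sin_pi, hcos1]; ring
  obtain ⟨y1, hy1mem, hy1pos, hphase1⟩ := key t1 ht1b ht1a
  obtain ⟨y2, hy2mem, hy2pos, hphase2⟩ := key t2 ht2b ht2a
  have hfy1 : f y1 = A * y1 ^ ρ := by
    rw [hf y1 hy1pos, hphase1, hcos1, mul_one]
  have hfy2 : f y2 = -(A * y2 ^ ρ) := by
    rw [hf y2 hy2pos, hphase2, hcos2]; ring
  have hr1 : A * a ^ ρ ≤ A * y1 ^ ρ :=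
    mul_le_mul_of_nonneg_left (Real.rpow_le_rpow ha.le hy1mem.1 hρ0.le) hA.le
  have hr2 : A * a ^ ρ ≤ A * y2 ^ ρ :=
    mul_le_mul_of_nonneg_left (Real.rpow_le_rpow ha.le hy2mem.1 hρ0.le) hA.le
  -- continuity of f on [a,b]
  have hcont : ContinuousOn f (Set.Icc a b) := by
    have : ContinuousOn
        (fun y : ℝ => A * y ^ ρ * Real.cos (ω * Real.log (1 / y) + η)) (Set.Icc a b) := by
      apply continuousOn_of_forall_continuousAt
      intro y hy
      have hy0 : 0 < y := lt_of_lt_of_le ha hy.1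
      have h1 : ContinuousAt (fun y : ℝ => y ^ ρ) y :=
        Real.continuousAt_rpow_const y ρ (Or.inl hy0.ne')
      have h2 : ContinuousAt (fun y : ℝ => ω * Real.log (1 / y) + η) y := by
        have hlog : ContinuousAt (fun y : ℝ => Real.log (1 / y)) y :=
          (Real.continuousAt_log (by positivity)).comp
            (continuousAt_const.div continuousAt_id hy0.ne')
        exact (hlog.const_mul ω).add continuousAt_const
      exact (continuousAt_const.mul h1).mul (Real.continuous_cos.continuousAt.comp h2)
    exact this.congr fun y hy => hf y (lt_of_lt_of_le ha hy.1)
  have hIVT := (isPreconnected_Icc (a := a) (b := b)).intermediate_value hy2mem hy1mem hcont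
  refine Set.Subset.trans ?_ hIVT
  rw [hfy1, hfy2]
  exact Set.Icc_subset_Icc (by linarith) hr1
end

section
/- Let A > 0, ω > 0, ρ ∈ (0,1), η ∈ ℝ, define f : (0,∞) → ℝ by f(y) = A·y^ρ·cos(ω·ln(1/y) + η), and for each integer k set a_k = exp((2η − (2k+1)π)/(2ω)). Then for every ρ' ∈ (ρ, 1) there exists an integer K such that for all integers i, j with i ≥ K and j ≥ ρ'·i, the interval [a_{2j+1}, a_{2j−1}] is contained in f([a_{2i+1}, a_{2i−1}]). -/
/-- Strip covering: with `a_k = exp((2η - (2k+1)π)/(2ω))` the zeros of the oscillatory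
    factor, for every `ρ' ∈ (ρ, 1)` and all large `i`, the image under
    `f(y) = A y^ρ cos(ω ln(1/y) + η)` of the strip `[a_{2i+1}, a_{2i-1}]` covers the
    strip `[a_{2j+1}, a_{2j-1}]` whenever `j ≥ ρ' i`. -/
theorem stmt15 (A ω ρ η : ℝ) (hA : 0 < A) (hω : 0 < ω) (hρ0 : 0 < ρ) (hρ1 : ρ < 1)
    (f : ℝ → ℝ)
    (hf : ∀ y ∈ Set.Ioi (0 : ℝ),
      f y = A * y ^ ρ * Real.cos (ω * Real.log (1 / y) + η))
    (a : ℤ → ℝ)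
    (ha : ∀ k : ℤ, a k = Real.exp ((2 * η - (2 * (k : ℝ) + 1) * Real.pi) / (2 * ω))) :
    ∀ ρ' : ℝ, ρ < ρ' → ρ' < 1 → ∃ K : ℤ, ∀ i j : ℤ, K ≤ i → ρ' * (i : ℝ) ≤ (j : ℝ) →
      Set.Icc (a (2 * j + 1)) (a (2 * j - 1)) ⊆
        f '' Set.Icc (a (2 * i + 1)) (a (2 * i - 1)) := by
  intro ρ' hρρ' hρ'1
  have hπ := Real.pi_pos
  have hρ'ρ : 0 < ρ' - ρ := by linarith
  refine ⟨⌈(2*η*(1-ρ) - 2*ω*Real.log A + Real.pi) / (4*Real.pi*(ρ'-ρ))⌉, ?_⟩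
  intro i j hKi hji
  have hapos : ∀ k : ℤ, 0 < a k := fun k => by rw [ha]; exact Real.exp_pos _
  -- key numeric inequality from the choice of K
  have hpos4 : (0:ℝ) < 4*Real.pi*(ρ'-ρ) := by positivity
  have hiC : 2*η*(1-ρ) - 2*ω*Real.log A + Real.pi ≤ 4*Real.pi*(ρ'-ρ)*(i:ℝ) := by
    have h1 : (2*η*(1-ρ) - 2*ω*Real.log A + Real.pi) / (4*Real.pi*(ρ'-ρ)) ≤ (i:ℝ) := by
      refine le_trans (Int.le_ceil _) ?_
      exact_mod_cast hKi
    rw [div_le_iff₀ hpos4] at h1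
    linarith
  -- the interior point where the cosine equals 1
  set c : ℝ := Real.exp ((η - 2*Real.pi*(i:ℝ))/ω) with hc
  have hcpos : 0 < c := Real.exp_pos _
  have hac1 : a (2*i+1) ≤ c := by
    rw [ha, hc]
    apply Real.exp_le_exp.mpr
    rw [div_le_div_iff₀ (by positivity) hω]
    push_cast
    nlinarith
  have hac2 : c ≤ a (2*i-1) := by
    rw [ha, hc]
    apply Real.exp_le_exp.mpr
    rw [div_le_div_iff₀ hω (by positivity)]
    push_cast
    nlinarith
  -- value of f at left endpoint is 0
  have hf1 : f (a (2*i+1)) = 0 := by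
    rw [hf _ (hapos _), ha, one_div, Real.log_inv, Real.log_exp]
    have hphase : ω * -((2 * η - (2 * ((2*i+1:ℤ):ℝ) + 1) * Real.pi) / (2 * ω)) + η
        = ((2*i+1:ℤ):ℝ) * Real.pi + Real.pi/2 := by
      push_cast
      field_simp
      ring
    rw [hphase, Real.cos_add_pi_div_two, Real.sin_int_mul_pi, neg_zero, mul_zero]
  -- value of f at c
  have hf2 : f c = Real.exp (Real.log A + ((η - 2*Real.pi*(i:ℝ))/ω) * ρ) := by
    rw [hf _ hcpos, hc, one_div, Real.log_inv, Real.log_exp]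
    have hphase : ω * -((η - 2*Real.pi*(i:ℝ))/ω) + η = (i:ℝ) * (2*Real.pi) := by
      field_simp
      ring
    rw [hphase]
    have : Real.cos ((i:ℝ) * (2*Real.pi)) = 1 := by
      exact_mod_cast Real.cos_int_mul_two_pi i
    rw [this, mul_one, Real.rpow_def_of_pos (Real.exp_pos _), Real.log_exp,
      Real.exp_add, Real.exp_log hA]
  -- continuity of f on the strip
  have hsub : Set.Icc (a (2*i+1)) (a (2*i-1)) ⊆ Set.Ioi (0:ℝ) :=
    fun y hy => lt_of_lt_of_le (hapos _) hy.1
  have hcont : ContinuousOn f (Set.Icc (a (2*i+1)) (a (2*i-1))) := by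
    have hg : ContinuousOn (fun y => A * y ^ ρ * Real.cos (ω * Real.log (1 / y) + η))
        (Set.Icc (a (2*i+1)) (a (2*i-1))) := by
      apply ContinuousOn.mul
      · exact continuousOn_const.mul
          (continuousOn_id.rpow_const (fun y hy => Or.inr hρ0.le))
      · apply Real.continuous_cos.comp_continuousOn
        apply ContinuousOn.add _ continuousOn_const
        apply continuousOn_const.mul
        apply ContinuousOn.log
        · exact continuousOn_const.div continuousOn_id
            (fun y hy => ne_of_gt (hsub hy))
        · intro y hy
          exact one_div_ne_zero (ne_of_gt (hsub hy))
    exact hg.congr (fun y hy => hf y (hsub hy))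
  -- the covering via IVT
  intro x hx
  have hIcc : Set.Icc (a (2*i+1)) c ⊆ Set.Icc (a (2*i+1)) (a (2*i-1)) :=
    Set.Icc_subset_Icc le_rfl hac2
  have hivt := intermediate_value_Icc hac1 (hcont.mono hIcc)
  have hx0 : f (a (2*i+1)) ≤ x := by
    rw [hf1]
    exact le_trans (hapos (2*j+1)).le hx.1
  have hxM : x ≤ f c := by
    refine le_trans hx.2 ?_
    rw [hf2, ha]
    apply Real.exp_le_exp.mpr
    rw [div_le_iff₀ (by positivity : (0:ℝ) < 2*ω)]
    push_cast
    have hj4 : 4*Real.pi*(ρ'*(i:ℝ)) ≤ 4*Real.pi*(j:ℝ) :=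
      mul_le_mul_of_nonneg_left hji (by positivity)
    have hlog : (Real.log A + (η - 2*Real.pi*(i:ℝ))/ω * ρ) * (2*ω)
        = 2*ω*Real.log A + 2*ρ*η - 4*Real.pi*ρ*(i:ℝ) := by
      field_simp
      ring
    rw [hlog]
    nlinarith
  exact Set.image_mono hIcc (hivt ⟨hx0, hxM⟩)
end
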